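/- Let p : K → K' be a right fibration of simplicial sets and let x be a vertex of K. Then the induced map on slice simplicial sets p_{/x} : K_{/x} → K'_{/p(x)} is a trivial fibration (i.e. has the right lifting property with respect to all boundary inclusions ∂Δⁿ ⊂ Δⁿ). -/

import Mathlib

open CategoryTheory Simplicial Opposite SimplexCategory

namespace SSet

/-- Right fibration: RLP against horns `Λ[n, i] ⟶ Δ[n]` with `0 < i`. -/
def IsRightFibration {X Y : SSet} (p : X ⟶ Y) : Prop :=
  ∀ (n : ℕ) (i : Fin (n + 2)), 0 < i → HasLiftingProperty (Λ[n + 1, i].ι) p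

/-- Trivial fibration: RLP against all boundary inclusions `∂Δ[n] ⟶ Δ[n]`. -/
def IsTrivialFibration {X Y : SSet} (p : X ⟶ Y) : Prop :=
  ∀ n : ℕ, HasLiftingProperty (∂Δ[n].ι) p

/-- The functor `⦋n⦌ ↦ ⦋n⦌ ⋆ Δ⁰ = [n+1]` on the simplex category, sending a monotone map
to its extension fixing the added top element. -/
def coneFunctor : SimplexCategory ⥤ SimplexCategory where
  obj a := SimplexCategory.mk (a.len + 1)
  map {a b} f := SimplexCategory.Hom.mk
    ⟨Fin.snoc (fun j => ((f.toOrderHom j).castSucc : Fin (b.len + 2)))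
      (Fin.last (b.len + 1)), by
      intro c d hcd
      induction d using Fin.lastCases with
      | last => simp [Fin.snoc_last, Fin.le_last]
      | cast d' =>
        have hc : c < Fin.last _ := lt_of_le_of_lt hcd (Fin.castSucc_lt_last d')
        induction c using Fin.lastCases with
        | last => exact absurd rfl (ne_of_lt hc)
        | cast c' =>
          simpa [Fin.snoc_castSucc] using
            Fin.castSucc_le_castSucc_iff.mpr (f.toOrderHom.monotone (by simpa using hcd))⟩
  map_id a := by
    apply SimplexCategory.Hom.ext
    ext j
    induction j using Fin.lastCases with
    | last => simp [Fin.snoc_last]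
    | cast j' => simp [Fin.snoc_castSucc]
  map_comp {a b c} f g := by
    apply SimplexCategory.Hom.ext
    ext j
    induction j using Fin.lastCases with
    | last =>
      simp [Fin.snoc]
      dsimp only [DFunLike.coe, OrderHom.instFunLike]
      simp [Fin.snoc]
    | cast j' =>
      have hj : (j' : ℕ) ≤ a.len := by have := j'.isLt; simp at this; omega
      simp [Fin.snoc]
      dsimp only [DFunLike.coe, OrderHom.instFunLike]
      have hj2 : ((f.toOrderHom j' : Fin _) : ℕ) ≤ b.len := by
        have := (f.toOrderHom j').isLt; simp at this; omega
      simp [Fin.snoc, hj, hj2]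

/-- The cone point inclusion `Δ⁰ ⟶ ⦋n⦌ ⋆ Δ⁰`. -/
def lastPoint (a : SimplexCategory) : (⦋0⦌ : SimplexCategory) ⟶ coneFunctor.obj a :=
  SimplexCategory.Hom.mk ⟨fun _ => Fin.last (a.len + 1), monotone_const⟩

lemma lastPoint_comp {a b : SimplexCategory} (f : a ⟶ b) :
    lastPoint a ≫ coneFunctor.map f = lastPoint b := by
  apply SimplexCategory.Hom.ext
  ext j
  show ((Fin.snoc (α := fun _ => Fin (b.len + 2)) (fun j => ((f.toOrderHom j).castSucc))
    (Fin.last (b.len + 1)) (Fin.last (a.len + 1)) : Fin (b.len + 2)) : ℕ) =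
      (Fin.last (b.len + 1) : ℕ)
  rw [Fin.snoc_last]

/-- The slice simplicial set `K_{/x}` for a vertex `x` of `K`: its `n`-simplices are the
maps `Δⁿ ⋆ Δ⁰ ≅ Δ^{n+1} → K` restricting to `x` on the cone point. -/
def slice (K : SSet) (x : K _⦋0⦌) : SSet where
  obj m := { σ : K.obj (op (coneFunctor.obj m.unop)) // K.map (lastPoint m.unop).op σ = x }
  map {m₁ m₂} f := TypeCat.ofHom fun σ => ⟨K.map (coneFunctor.map f.unop).op σ.1, by
    rw [← FunctorToTypes.map_comp_apply, ← op_comp, lastPoint_comp, σ.2]⟩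
  map_id m := by
    ext σ
    simp
  map_comp {m₁ m₂ m₃} f g := by
    ext σ
    simp [FunctorToTypes.map_comp_apply]

/-- The map `K_{/x} ⟶ K'_{/p(x)}` induced on slices by `p : K ⟶ K'`. -/
def sliceMap {K K' : SSet} (p : K ⟶ K') (x : K _⦋0⦌) :
    slice K x ⟶ slice K' (p.app _ x) where
  app m := TypeCat.ofHom fun σ => ⟨p.app _ σ.1, by rw [← FunctorToTypes.naturality, σ.2]⟩
  naturality {m₁ m₂} f := by
    ext σ
    dsimp [slice]
    apply Subtype.ext
    exact NatTrans.naturality_apply p _ _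



namespace SliceTFAux

open stdSimplex

/-- Evaluate a map from a standard simplex on an arbitrary simplex. -/
lemma app_eq {X : SSet} {d : SimplexCategory} (g : stdSimplex.obj d ⟶ X)
    (m : SimplexCategoryᵒᵖ) (α : (stdSimplex.obj d).obj m) :
    g.app m α = X.map (α.down).op (yonedaEquiv g) := by
  have h := NatTrans.naturality_apply g (α.down).op (stdSimplex.objEquiv.symm (𝟙 d))
  have h2 : (stdSimplex.obj d).map (α.down).op (stdSimplex.objEquiv.symm (𝟙 d)) = α := by
    rw [stdSimplex.map_apply]
    simp
    rfl
  rw [h2] at h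
  exact h

variable {n : ℕ}

/-- The number of indices not mapped to the last vertex. -/
def nh {M : ℕ} (φ : Fin M →o Fin (n + 2)) : ℕ :=
  (Finset.univ.filter fun i => φ i ≠ Fin.last (n + 1)).card

lemma nh_le {M : ℕ} (φ : Fin M →o Fin (n + 2)) : nh φ ≤ M := by
  simpa [nh] using Finset.card_filter_le Finset.univ fun i => φ i ≠ Fin.last (n + 1)

lemma lt_nh_iff {M : ℕ} (φ : Fin M →o Fin (n + 2)) (i : Fin M) :
    (i : ℕ) < nh φ ↔ φ i ≠ Fin.last (n + 1) := by
  constructor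
  · intro h hlast
    have hsub : (Finset.univ.filter fun j => φ j ≠ Fin.last (n + 1)) ⊆ Finset.Iio i := by
      intro j hj
      simp only [Finset.mem_filter, Finset.mem_univ, true_and] at hj
      rw [Finset.mem_Iio]
      by_contra hc
      exact hj (le_antisymm (Fin.le_last _) (hlast ▸ φ.monotone (not_lt.mp hc)))
    have := (Finset.card_le_card hsub).trans_eq (Fin.card_Iio i)
    change nh φ ≤ _ at this
    omega
  · intro h
    have hsub : Finset.Iic i ⊆ Finset.univ.filter fun j => φ j ≠ Fin.last (n + 1) := by
      intro j hj
      rw [Finset.mem_Iic] at hj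
      simp only [Finset.mem_filter, Finset.mem_univ, true_and]
      intro hl
      exact h (le_antisymm (Fin.le_last _) (hl ▸ φ.monotone hj))
    have := ((Fin.card_Iic i).symm.trans_le (Finset.card_le_card hsub))
    change _ ≤ nh φ at this
    omega

lemma apply_eq_last {M : ℕ} (φ : Fin M →o Fin (n + 2)) (i : Fin M)
    (h : ¬ (i : ℕ) < nh φ) : φ i = Fin.last (n + 1) :=
  not_not.mp fun hc => h ((lt_nh_iff φ i).mpr hc)

/-- The initial part of `φ`, valued in `Fin (n+1)`. -/
def psi {M : ℕ} (φ : Fin M →o Fin (n + 2)) : Fin (nh φ) →o Fin (n + 1) where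
  toFun j := (φ ⟨j.1, lt_of_lt_of_le j.2 (nh_le φ)⟩).castPred
    ((lt_nh_iff φ _).mp j.2)
  monotone' j₁ j₂ h := by
    have h2 : φ ⟨j₁.1, lt_of_lt_of_le j₁.2 (nh_le φ)⟩ ≤ φ ⟨j₂.1, lt_of_lt_of_le j₂.2 (nh_le φ)⟩ :=
      φ.monotone h
    simpa only [Fin.le_def, Fin.coe_castPred] using h2

@[simp] lemma psi_val {M : ℕ} (φ : Fin M →o Fin (n + 2)) (j : Fin (nh φ)) :
    (psi φ j : ℕ) = (φ ⟨j.1, lt_of_lt_of_le j.2 (nh_le φ)⟩ : ℕ) := rfl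

/-- The projection collapsing the last part. -/
def theta {M : ℕ} (φ : Fin M →o Fin (n + 2)) : Fin M →o Fin (nh φ + 1) where
  toFun i := ⟨min i.1 (nh φ), by omega⟩
  monotone' i j h := by
    simp only [Fin.mk_le_mk]
    exact min_le_min h (le_refl _)

@[simp] lemma theta_val {M : ℕ} (φ : Fin M →o Fin (n + 2)) (i : Fin M) :
    (theta φ i : ℕ) = min i.1 (nh φ) := rfl

/-- The cone of a monotone map, as a morphism in the simplex category. -/
def coneMap {a b : ℕ} (β : Fin a →o Fin b) : (⦋a⦌ : SimplexCategory) ⟶ ⦋b⦌ :=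
  SimplexCategory.Hom.mk
    ⟨Fin.snoc (fun j => (β j).castSucc) (Fin.last b), by
      intro c d hcd
      induction d using Fin.lastCases with
      | last => simp [Fin.snoc_last, Fin.le_last]
      | cast d' =>
        have hc : c < Fin.last _ := lt_of_le_of_lt hcd (Fin.castSucc_lt_last d')
        induction c using Fin.lastCases with
        | last => exact absurd rfl (ne_of_lt hc)
        | cast c' =>
          simpa [Fin.snoc_castSucc] using
            Fin.castSucc_le_castSucc_iff.mpr (β.monotone (by simpa using hcd))⟩

lemma coneMap_val {a b : ℕ} (β : Fin a →o Fin b) (i : Fin (a + 1)) :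
    ((coneMap β).toOrderHom i : ℕ) = if h : (i : ℕ) < a then (β ⟨i.1, h⟩ : ℕ) else b := by
  induction i using Fin.lastCases with
  | last =>
    show ((Fin.snoc (α := fun _ => Fin (b + 1)) (fun j => (β j).castSucc) (Fin.last b)
      (Fin.last a) : Fin (b + 1)) : ℕ) = _
    rw [Fin.snoc_last]; simp
  | cast i' =>
    show ((Fin.snoc (α := fun _ => Fin (b + 1)) (fun j => (β j).castSucc) (Fin.last b)
      (Fin.castSucc i') : Fin (b + 1)) : ℕ) = _
    rw [Fin.snoc_castSucc]; simp





lemma coneFunctor_map_eq {a b : SimplexCategory} (u : a ⟶ b) :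
    coneFunctor.map u = coneMap u.toOrderHom := rfl

lemma psi_not_surj {M : ℕ} (φ : Fin M →o Fin (n + 2))
    (hφ : Set.range φ ∪ {Fin.last (n + 1)} ≠ Set.univ) :
    ¬ Function.Surjective (psi φ) := by
  obtain ⟨c, hc⟩ := (Set.ne_univ_iff_exists_notMem _).mp hφ
  simp only [Set.mem_union, Set.mem_range, Set.mem_singleton_iff, not_or, not_exists] at hc
  intro hs
  obtain ⟨j, hj⟩ := hs (c.castPred hc.2)
  refine hc.1 ⟨j.1, lt_of_lt_of_le j.2 (nh_le φ)⟩ ?_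
  have := congrArg Fin.val hj
  simp only [psi_val, Fin.coe_castPred] at this
  exact Fin.ext this

section Main

variable {K K' : SSet} (p : K ⟶ K') (x : K _⦋0⦌) {n : ℕ}

/-- The simplices of `K` defined by a map `(∂Δ[n] : SSet) ⟶ slice K x`, including the cone point
simplex for the empty face. -/
def lifted (f : (∂Δ[n] : SSet) ⟶ slice K x) :
    (k : ℕ) → (ψ : Fin k →o Fin (n + 1)) → ¬ Function.Surjective ψ → K.obj (op ⦋k⦌) := fun k ψ h =>
  match k, ψ, h with
  | 0, _, _ => x
  | k + 1, ψ, h => (f.app (op ⦋k⦌) ⟨stdSimplex.objMk ψ, h⟩).1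

lemma lifted_last (f : (∂Δ[n] : SSet) ⟶ slice K x) (k : ℕ) (ψ : Fin k →o Fin (n + 1))
    (h : ¬ Function.Surjective ψ) :
    K.map (SimplexCategory.const ⦋0⦌ ⦋k⦌ (Fin.last k)).op (lifted x f k ψ h) = x := by
  cases k with
  | zero =>
    have : SimplexCategory.const ⦋0⦌ ⦋0⦌ (Fin.last 0) = 𝟙 (⦋0⦌ : SimplexCategory) := by
      apply SimplexCategory.Hom.ext
      apply OrderHom.ext
      funext i
      have hi : i = Fin.last (⦋0⦌.len) := Fin.ext (by have := i.isLt; simp only [SimplexCategory.len_mk, Fin.val_last] at this ⊢; omega)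
      subst hi
      rfl
    rw [this, op_id, FunctorToTypes.map_id_apply]
    rfl
  | succ k =>
    have h2 := (f.app (op ⦋k⦌) ⟨stdSimplex.objMk ψ, h⟩).2
    have : SimplexCategory.const ⦋0⦌ ⦋k + 1⦌ (Fin.last (k + 1)) = lastPoint ⦋k⦌ := by
      apply SimplexCategory.Hom.ext
      apply OrderHom.ext
      funext i
      rfl
    rw [this]
    exact h2

lemma lifted_natural (f : (∂Δ[n] : SSet) ⟶ slice K x) {k₁ k₂ : ℕ}
    (ψ₁ : Fin k₁ →o Fin (n + 1)) (ψ₂ : Fin k₂ →o Fin (n + 1))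
    (h₁ : ¬ Function.Surjective ψ₁) (h₂ : ¬ Function.Surjective ψ₂)
    (β : Fin k₁ →o Fin k₂) (hβ : ∀ j, ψ₁ j = ψ₂ (β j)) :
    lifted x f k₁ ψ₁ h₁ = K.map (coneMap β).op (lifted x f k₂ ψ₂ h₂) := by
  cases k₁ with
  | zero =>
    have hc : coneMap β = SimplexCategory.const ⦋0⦌ ⦋k₂⦌ (Fin.last k₂) := by
      apply SimplexCategory.Hom.ext
      apply OrderHom.ext
      funext i
      have hi : i = Fin.last (⦋0⦌.len) := Fin.ext (by have := i.isLt; simp only [SimplexCategory.len_mk, Fin.val_last] at this ⊢; omega)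
      subst hi
      simp only [coneMap, SimplexCategory.Hom.toOrderHom_mk, OrderHom.coe_mk, Fin.snoc_last]
      rfl
    rw [hc, lifted_last]
    rfl
  | succ k =>
    cases k₂ with
    | zero => exact (β 0).elim0
    | succ k₂' =>
      have harg : (∂Δ[n] : SSet).map ((SimplexCategory.mkHom β).op) ⟨stdSimplex.objMk ψ₂, h₂⟩
          = ⟨stdSimplex.objMk ψ₁, h₁⟩ := by
        apply Subtype.ext
        show Δ[n].map _ _ = _
        rw [stdSimplex.map_apply]
        apply congrArg
        apply SimplexCategory.Hom.ext
        apply OrderHom.ext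
        funext j
        exact (hβ j).symm
      have hnat := NatTrans.naturality_apply f ((SimplexCategory.mkHom β).op)
          (⟨stdSimplex.objMk ψ₂, h₂⟩ : (∂Δ[n] : SSet).obj (op ⦋k₂'⦌))
      rw [harg] at hnat
      show (f.app (op ⦋k⦌) ⟨stdSimplex.objMk ψ₁, h₁⟩).1 = _
      rw [hnat]
      show K.map (coneFunctor.map (SimplexCategory.mkHom β)).op _ = _
      rw [coneFunctor_map_eq]
      show K.map (coneMap (SimplexCategory.Hom.toOrderHom (SimplexCategory.mkHom β))).op _ = _
      rfl

end Main

/-- Transport of indices along a reindexing map. -/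
def betaMap {M₁ M₂ : ℕ} (φ₁ : Fin M₁ →o Fin (n + 2)) (u : Fin M₂ →o Fin M₁) :
    Fin (nh (φ₁.comp u)) →o Fin (nh φ₁) where
  toFun j := ⟨(u ⟨j.1, lt_of_lt_of_le j.2 (nh_le _)⟩ : ℕ),
    (lt_nh_iff φ₁ _).mpr ((lt_nh_iff (φ₁.comp u) ⟨j.1, lt_of_lt_of_le j.2 (nh_le _)⟩).mp j.2)⟩
  monotone' j₁ j₂ h := u.monotone h

lemma betaMap_psi {M₁ M₂ : ℕ} (φ₁ : Fin M₁ →o Fin (n + 2)) (u : Fin M₂ →o Fin M₁)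
    (j : Fin (nh (φ₁.comp u))) :
    psi (φ₁.comp u) j = psi φ₁ (betaMap φ₁ u j) :=
  Fin.ext rfl

lemma theta_comp {M₁ M₂ : ℕ} (φ₁ : Fin M₁ →o Fin (n + 2)) (u : Fin M₂ →o Fin M₁)
    (i : Fin M₂) :
    ((coneMap (betaMap φ₁ u)).toOrderHom (theta (φ₁.comp u) i) : ℕ)
      = min (u i : ℕ) (nh φ₁) := by
  rw [coneMap_val]
  split_ifs with h
  · have hi : (i : ℕ) < nh (φ₁.comp u) := by
      have := h
      simp only [theta_val] at this
      omega
    have hidx : (⟨((theta (φ₁.comp u) i) : ℕ), h⟩ : Fin (nh (φ₁.comp u))) = ⟨i.1, hi⟩ :=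
      Fin.ext (by simp only [theta_val]; omega)
    rw [hidx]
    have hval : (betaMap φ₁ u ⟨i.1, hi⟩ : ℕ) = (u i : ℕ) := rfl
    rw [hval]
    have hui : (u i : ℕ) < nh φ₁ := by
      refine (lt_nh_iff φ₁ (u i)).mpr ?_
      have := (lt_nh_iff (φ₁.comp u) i).mp hi
      exact this
    omega
  · have hi : ¬ (i : ℕ) < nh (φ₁.comp u) := by
      intro hc
      apply h
      simp only [theta_val]
      omega
    have hlast : φ₁ (u i) = Fin.last (n + 1) := apply_eq_last (φ₁.comp u) i hi
    have : ¬ (u i : ℕ) < nh φ₁ := fun hc => (lt_nh_iff φ₁ (u i)).mp hc hlast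
    omega

section Main2

variable {K K' : SSet} (p : K ⟶ K') (x : K _⦋0⦌) {n : ℕ}

/-- The map from the horn determined by `f`. -/
def Fhorn (f : (∂Δ[n] : SSet) ⟶ slice K x) : (Λ[n + 1, Fin.last (n + 1)] : SSet) ⟶ K where
  app m := TypeCat.ofHom fun α =>
    K.map (SimplexCategory.mkHom (theta (asOrderHom α.1))).op
      (lifted x f (nh (asOrderHom α.1)) (psi (asOrderHom α.1)) (psi_not_surj _ α.2))
  naturality m₁ m₂ u := by
    ext α
    show K.map (SimplexCategory.mkHom (theta ((asOrderHom α.1).comp u.unop.toOrderHom))).op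
        (lifted x f _ (psi ((asOrderHom α.1).comp u.unop.toOrderHom))
          (psi_not_surj _ ((Λ[n + 1, Fin.last (n + 1)] : SSet).map u α).2)) =
      K.map u (K.map (SimplexCategory.mkHom (theta (asOrderHom α.1))).op
        (lifted x f _ (psi (asOrderHom α.1)) (psi_not_surj _ α.2)))
    rw [lifted_natural x f _ _ _ (psi_not_surj _ α.2)
      (betaMap (asOrderHom α.1) u.unop.toOrderHom)
      (betaMap_psi (asOrderHom α.1) u.unop.toOrderHom)]
    rw [← FunctorToTypes.map_comp_apply, ← op_comp]
    have key : SimplexCategory.mkHom (theta ((asOrderHom α.1).comp u.unop.toOrderHom)) ≫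
        coneMap (betaMap (asOrderHom α.1) u.unop.toOrderHom)
        = u.unop ≫ SimplexCategory.mkHom (theta (asOrderHom α.1)) := by
      apply SimplexCategory.Hom.ext
      apply OrderHom.ext
      funext i
      apply Fin.ext
      exact theta_comp (asOrderHom α.1) (SimplexCategory.Hom.toOrderHom u.unop) i
    rw [key, op_comp, FunctorToTypes.map_comp_apply, Quiver.Hom.op_unop]

/-- `p` maps `lifted` simplices to restrictions of the distinguished simplex of `g`. -/
lemma p_lifted (f : (∂Δ[n] : SSet) ⟶ slice K x) (g : Δ[n] ⟶ slice K' (p.app _ x))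
    (hsq : f ≫ sliceMap p x = ∂Δ[n].ι ≫ g)
    (k : ℕ) (ψ : Fin k →o Fin (n + 1)) (h : ¬ Function.Surjective ψ) :
    p.app (op ⦋k⦌) (lifted x f k ψ h)
      = K'.map (coneMap ψ).op (yonedaEquiv g).1 := by
  cases k with
  | zero =>
    have hc : coneMap ψ = lastPoint ⦋n⦌ := by
      apply SimplexCategory.Hom.ext
      apply OrderHom.ext
      funext i
      have hi : i = Fin.last (⦋0⦌.len) := Fin.ext (by
        have := i.isLt; simp only [SimplexCategory.len_mk, Fin.val_last] at this ⊢; omega)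
      subst hi
      simp only [coneMap, SimplexCategory.Hom.toOrderHom_mk, OrderHom.coe_mk, Fin.snoc_last]
      rfl
    rw [hc]
    exact ((yonedaEquiv g).2).symm
  | succ k =>
    show ((sliceMap p x).app (op ⦋k⦌) (f.app (op ⦋k⦌) ⟨stdSimplex.objMk ψ, h⟩)).1 = _
    rw [show (sliceMap p x).app (op ⦋k⦌) (f.app (op ⦋k⦌) ⟨stdSimplex.objMk ψ, h⟩)
        = g.app (op ⦋k⦌) (stdSimplex.objMk ψ) from
          ConcreteCategory.congr_hom (NatTrans.congr_app hsq (op ⦋k⦌)) _]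
    show (g.app (op ⦋k⦌) (stdSimplex.objMk ψ)).1 = _
    rw [app_eq]
    show K'.map (coneFunctor.map (SimplexCategory.mkHom ψ)).op _ = _
    rw [coneFunctor_map_eq]
    rfl

end Main2

lemma const_last_not_univ {N : ℕ} :
    Set.range (asOrderHom (⟨SimplexCategory.const ⦋0⦌ ⦋N + 1⦌ (Fin.last (N + 1))⟩ :
      Δ[N + 1].obj (op ⦋0⦌))) ∪ {Fin.last (N + 1)} ≠ Set.univ := by
  intro hu
  rw [Set.eq_univ_iff_forall] at hu
  rcases hu 0 with ⟨y, hy⟩ | h1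
  · have hy' : (Fin.last (N + 1) : Fin (N + 2)) = 0 := hy
    have := congrArg Fin.val hy'
    simp only [Fin.val_last, Fin.val_zero] at this
    omega
  · have := congrArg Fin.val (Set.mem_singleton_iff.mp h1)
    simp only [Fin.val_last, Fin.val_zero] at this
    omega

lemma asOrderHom_up {N' : ℕ} {m : SimplexCategoryᵒᵖ} (v : m.unop ⟶ ⦋N'⦌) :
    asOrderHom (⟨v⟩ : Δ[N'].obj m) = v.toOrderHom := rfl

lemma hom_zero_ext {a : SimplexCategory} (v w : a ⟶ ⦋0⦌) : v = w := by
  apply SimplexCategory.Hom.ext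
  apply OrderHom.ext
  funext i
  apply Fin.ext
  have h1 := (v.toOrderHom i).isLt
  have h2 := (w.toOrderHom i).isLt
  simp only [SimplexCategory.len_mk] at h1 h2
  omega

lemma coneMap_comp {a b c : ℕ} (β : Fin a →o Fin b) (γ : Fin b →o Fin c) :
    coneMap (γ.comp β) = coneMap β ≫ coneMap γ := by
  apply SimplexCategory.Hom.ext
  apply OrderHom.ext
  funext i
  rw [SimplexCategory.comp_toOrderHom]
  induction i using Fin.lastCases with
  | last =>
    simp [coneMap, SimplexCategory.Hom.toOrderHom_mk, Fin.snoc_last]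
    dsimp only [DFunLike.coe, OrderHom.instFunLike]
    simp [Fin.snoc]
  | cast j =>
    simp [coneMap, SimplexCategory.Hom.toOrderHom_mk, Fin.snoc_castSucc]
    dsimp only [DFunLike.coe, OrderHom.instFunLike]
    simp [Fin.snoc]

end SliceTFAux

open SliceTFAux stdSimplex

/-- if `p : K ⟶ K'` is a right fibration of simplicial sets and `x` is a
vertex of `K`, then the induced map on slices `K_{/x} ⟶ K'_{/p(x)}` is a trivial
fibration. -/
theorem sliceMap_trivialFibration_of_rightFibration {K K' : SSet} (p : K ⟶ K')
    (hp : IsRightFibration p) (x : K _⦋0⦌) :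
    IsTrivialFibration (sliceMap p x) := by
  intro N
  constructor
  intro f g hsq
  set τ := yonedaEquiv g with hτdef
  let G : Δ[N + 1] ⟶ K' := yonedaEquiv.symm τ.1
  have hw : Fhorn x f ≫ p = Λ[N + 1, Fin.last (N + 1)].ι ≫ G := by
    apply hom_ext
    intro m
    ext α
    show p.app m (K.map (SimplexCategory.mkHom (theta (asOrderHom α.1))).op
        (lifted x f _ (psi (asOrderHom α.1)) (psi_not_surj _ α.2))) = G.app m α.1
    have hkey : SimplexCategory.mkHom (theta (asOrderHom α.1)) ≫ coneMap (psi (asOrderHom α.1))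
        = α.1.down := by
      apply SimplexCategory.Hom.ext
      apply OrderHom.ext
      funext i
      apply Fin.ext
      rw [SimplexCategory.comp_toOrderHom]
      show ((coneMap (psi (asOrderHom α.1))).toOrderHom (theta (asOrderHom α.1) i) : ℕ)
        = ((asOrderHom α.1) i : ℕ)
      rw [coneMap_val]
      split_ifs with h
      · have hi : (i : ℕ) < nh (asOrderHom α.1) := by
          have := h; simp only [theta_val] at this; omega
        have hidx : (⟨((theta (asOrderHom α.1) i) : ℕ), h⟩ : Fin (nh (asOrderHom α.1)))
            = ⟨i.1, hi⟩ := Fin.ext (by simp only [theta_val]; omega)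
        rw [hidx]
        rfl
      · have hi : ¬ (i : ℕ) < nh (asOrderHom α.1) := by
          intro hc; apply h; simp only [theta_val]; omega
        rw [apply_eq_last (asOrderHom α.1) i hi]
        rfl
    calc p.app m (K.map (SimplexCategory.mkHom (theta (asOrderHom α.1))).op
          (lifted x f _ (psi (asOrderHom α.1)) (psi_not_surj _ α.2)))
        = K'.map (SimplexCategory.mkHom (theta (asOrderHom α.1))).op
            (p.app _ (lifted x f _ (psi (asOrderHom α.1)) (psi_not_surj _ α.2))) :=
          NatTrans.naturality_apply p _ _
      _ = K'.map (SimplexCategory.mkHom (theta (asOrderHom α.1))).op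
            (K'.map (coneMap (psi (asOrderHom α.1))).op τ.1) := by
          rw [p_lifted p x f g hsq.w _ _ (psi_not_surj _ α.2)]
      _ = K'.map ((SimplexCategory.mkHom (theta (asOrderHom α.1))
            ≫ coneMap (psi (asOrderHom α.1))).op) τ.1 := by
          erw [op_comp, FunctorToTypes.map_comp_apply]
      _ = K'.map (α.1.down).op τ.1 := by rw [hkey]
      _ = G.app m α.1 := rfl
  have hpos : (0 : Fin (N + 2)) < Fin.last (N + 1) := by
    rw [Fin.lt_def]
    simp
  haveI := hp N (Fin.last (N + 1)) hpos
  have sq2 : CommSq (Fhorn x f) (Λ[N + 1, Fin.last (N + 1)].ι) p G := ⟨hw⟩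
  set L := sq2.lift with hLdef
  set σK := yonedaEquiv L with hσKdef
  -- the last vertex of σK is x
  have hσlast : K.map (SimplexCategory.const ⦋0⦌ ⦋N + 1⦌ (Fin.last (N + 1))).op σK = x := by
    have h2 := ConcreteCategory.congr_hom (NatTrans.congr_app sq2.fac_left (op ⦋0⦌))
      ⟨⟨SimplexCategory.const ⦋0⦌ ⦋N + 1⦌ (Fin.last (N + 1))⟩, const_last_not_univ⟩
    simp only [NatTrans.comp_app, types_comp_apply] at h2
    have hnh0 : nh (asOrderHom (⟨SimplexCategory.const ⦋0⦌ ⦋N + 1⦌ (Fin.last (N + 1))⟩ :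
        Δ[N + 1].obj (op ⦋0⦌))) = 0 := by
      by_contra hc
      exact (lt_nh_iff _ (⟨0, Nat.succ_pos _⟩ : Fin (⦋0⦌.len + 1))).mp
        (Nat.pos_of_ne_zero hc) rfl
    let ψ0 : Fin 0 →o Fin (N + 1) := ⟨Fin.elim0, fun a => a.elim0⟩
    have h0 : ¬ Function.Surjective ψ0 := fun hs => by
      obtain ⟨j, _⟩ := hs 0
      exact j.elim0
    have hlift := lifted_natural x f
      (psi (asOrderHom (⟨SimplexCategory.const ⦋0⦌ ⦋N + 1⦌ (Fin.last (N + 1))⟩ :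
        Δ[N + 1].obj (op ⦋0⦌)))) ψ0
      (psi_not_surj _ const_last_not_univ) h0
      ⟨fun j => (Fin.cast hnh0 j).elim0, fun {a b} _ => (Fin.cast hnh0 a).elim0⟩
      (fun j => (Fin.cast hnh0 j).elim0)
    calc K.map (SimplexCategory.const ⦋0⦌ ⦋N + 1⦌ (Fin.last (N + 1))).op σK
        = L.app (op ⦋0⦌) ⟨SimplexCategory.const ⦋0⦌ ⦋N + 1⦌ (Fin.last (N + 1))⟩ :=
          (app_eq L _ _).symm
      _ = K.map (SimplexCategory.mkHom (theta (asOrderHom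
            (⟨SimplexCategory.const ⦋0⦌ ⦋N + 1⦌ (Fin.last (N + 1))⟩ :
              Δ[N + 1].obj (op ⦋0⦌))))).op
          (lifted x f _ (psi _) (psi_not_surj _ const_last_not_univ)) := h2
      _ = K.map (SimplexCategory.mkHom (theta _)).op
            (K.map (coneMap ⟨fun j => (Fin.cast hnh0 j).elim0,
              fun {a b} _ => (Fin.cast hnh0 a).elim0⟩).op (lifted x f 0 ψ0 h0)) := by
          rw [hlift]
      _ = K.map ((SimplexCategory.mkHom (theta _) ≫ coneMap ⟨fun j => (Fin.cast hnh0 j).elim0,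
              fun {a b} _ => (Fin.cast hnh0 a).elim0⟩).op) (lifted x f 0 ψ0 h0) := by
          rw [op_comp, FunctorToTypes.map_comp_apply]
      _ = x := by
          rw [hom_zero_ext (SimplexCategory.mkHom (theta _) ≫ coneMap ⟨fun j => (Fin.cast hnh0 j).elim0,
              fun {a b} _ => (Fin.cast hnh0 a).elim0⟩) (𝟙 (⦋0⦌ : SimplexCategory))]
          exact FunctorToTypes.map_id_apply K (lifted x f 0 ψ0 h0)
  -- the candidate lift
  let ℓ : Δ[N] ⟶ slice K x :=
    { app := fun m => TypeCat.ofHom fun α => ⟨K.map (coneMap (asOrderHom α)).op σK, by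
        have hc : (lastPoint m.unop : ⦋0⦌ ⟶ ⦋m.unop.len + 1⦌) ≫ coneMap (asOrderHom α)
            = SimplexCategory.const ⦋0⦌ ⦋N + 1⦌ (Fin.last (N + 1)) := by
          apply SimplexCategory.Hom.ext
          apply OrderHom.ext
          funext i
          apply Fin.ext
          erw [SimplexCategory.comp_toOrderHom]
          show ((coneMap (asOrderHom α)).toOrderHom (Fin.last (m.unop.len + 1)) : ℕ) = _
          rw [coneMap_val, dif_neg (by simp)]
          rfl
        erw [← hσlast, ← hc, op_comp]
        exact (FunctorToTypes.map_comp_apply K _ _ σK).symm⟩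
      naturality := fun m₁ m₂ u => by
        ext α
        apply Subtype.ext
        show K.map (coneMap ((asOrderHom α).comp u.unop.toOrderHom)).op σK
          = K.map (coneFunctor.map u.unop).op (K.map (coneMap (asOrderHom α)).op σK)
        erw [← FunctorToTypes.map_comp_apply, ← op_comp, coneFunctor_map_eq, ← coneMap_comp]
        rfl
      }
  have hfacl : ∂Δ[N].ι ≫ ℓ = f := by
    apply hom_ext
    intro m
    ext α
    apply Subtype.ext
    show K.map (coneMap (asOrderHom α.1)).op σK = (f.app m α).1
    obtain ⟨c, hc⟩ := not_forall.mp α.2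
    have hmem : Set.range (asOrderHom (⟨coneMap (asOrderHom α.1)⟩ :
        Δ[N + 1].obj (op ⦋m.unop.len + 1⦌))) ∪ {Fin.last (N + 1)} ≠ Set.univ := by
      rw [asOrderHom_up]
      intro hu
      rw [Set.eq_univ_iff_forall] at hu
      rcases hu c.castSucc with ⟨y, hy⟩ | h1
      · have hy' : (coneMap (asOrderHom α.1)).toOrderHom
            (⟨y.1, by simpa using y.2⟩ : Fin (m.unop.len + 1 + 1)) = c.castSucc := hy
        have hv := congrArg Fin.val hy'
        rw [coneMap_val] at hv
        split_ifs at hv with h2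
        · exact hc ⟨⟨y.1, h2⟩, Fin.ext (by simpa using hv)⟩
        · have := c.isLt
          simp only [Fin.coe_castSucc] at hv
          omega
      · have := congrArg Fin.val (Set.mem_singleton_iff.mp h1)
        simp only [Fin.coe_castSucc, Fin.val_last] at this
        have := c.isLt
        omega
    have h2 := ConcreteCategory.congr_hom (NatTrans.congr_app sq2.fac_left (op ⦋m.unop.len + 1⦌))
      ⟨⟨coneMap (asOrderHom α.1)⟩, hmem⟩
    simp only [NatTrans.comp_app, types_comp_apply] at h2
    have hone : ∀ j : Fin (m.unop.len + 1 + 1), (j : ℕ) < m.unop.len + 1 →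
        (coneMap (asOrderHom α.1)).toOrderHom j ≠ Fin.last (N + 1) := by
      intro j hj hlast
      have hv := congrArg Fin.val hlast
      rw [coneMap_val, dif_pos hj] at hv
      have := ((asOrderHom α.1) ⟨j.1, hj⟩).isLt
      simp only [Fin.val_last] at hv
      omega
    have hlastb : (coneMap (asOrderHom α.1)).toOrderHom (Fin.last (m.unop.len + 1))
        = Fin.last (N + 1) := by
      apply Fin.ext
      rw [coneMap_val, dif_neg (by simp)]
      rfl
    have hnhb : nh (asOrderHom (⟨coneMap (asOrderHom α.1)⟩ :
        Δ[N + 1].obj (op ⦋m.unop.len + 1⦌))) = m.unop.len + 1 := by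
      rw [asOrderHom_up]
      have hle : ¬ m.unop.len + 1 < nh ((coneMap (asOrderHom α.1)).toOrderHom) := by
        intro hgt
        exact (lt_nh_iff _ (Fin.last (m.unop.len + 1))).mp
          (by simp only [Fin.val_last]; omega) hlastb
      have hge : m.unop.len < nh ((coneMap (asOrderHom α.1)).toOrderHom) :=
        (lt_nh_iff _ (⟨m.unop.len, by omega⟩ : Fin (m.unop.len + 1 + 1))).mpr
          (hone _ (Nat.lt_succ_self _))
      omega
    let β : Fin (nh (asOrderHom (⟨coneMap (asOrderHom α.1)⟩ : Δ[N + 1].obj (op ⦋m.unop.len + 1⦌)))) →o Fin (m.unop.len + 1) :=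
      ⟨fun j => ⟨j.1, lt_of_lt_of_le j.2 hnhb.le⟩, fun {a b} h => h⟩
    have hβ : ∀ j, psi (asOrderHom (⟨coneMap (asOrderHom α.1)⟩ : Δ[N + 1].obj (op ⦋m.unop.len + 1⦌))) j = (asOrderHom α.1) (β j) := by
      intro j
      apply Fin.ext
      rw [psi_val]
      show ((coneMap (asOrderHom α.1)).toOrderHom ⟨j.1, lt_of_lt_of_le j.2 (nh_le (asOrderHom (⟨coneMap (asOrderHom α.1)⟩ : Δ[N + 1].obj (op ⦋m.unop.len + 1⦌))))⟩ : ℕ) = _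
      rw [coneMap_val, dif_pos (show ((⟨j.1, lt_of_lt_of_le j.2 (nh_le (asOrderHom (⟨coneMap (asOrderHom α.1)⟩ : Δ[N + 1].obj (op ⦋m.unop.len + 1⦌))))⟩ :
        Fin (m.unop.len + 1 + 1)) : ℕ) < m.unop.len + 1 from lt_of_lt_of_le j.2 hnhb.le)]
      rfl
    have hid : SimplexCategory.mkHom (theta (asOrderHom (⟨coneMap (asOrderHom α.1)⟩ : Δ[N + 1].obj (op ⦋m.unop.len + 1⦌)))) ≫ coneMap β
        = 𝟙 (⦋m.unop.len + 1⦌ : SimplexCategory) := by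
      apply SimplexCategory.Hom.ext
      apply OrderHom.ext
      funext i
      apply Fin.ext
      rw [SimplexCategory.comp_toOrderHom]
      show ((coneMap β).toOrderHom (theta (asOrderHom (⟨coneMap (asOrderHom α.1)⟩ : Δ[N + 1].obj (op ⦋m.unop.len + 1⦌))) i) : ℕ) = (i : ℕ)
      rw [coneMap_val]
      split_ifs with h
      · show ((theta (asOrderHom (⟨coneMap (asOrderHom α.1)⟩ : Δ[N + 1].obj (op ⦋m.unop.len + 1⦌))) i : Fin _) : ℕ) = (i : ℕ)
        rw [theta_val] at h ⊢
        omega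
      · rw [theta_val] at h
        have hi := i.isLt
        simp only [SimplexCategory.len_mk] at hi
        omega
    calc K.map (coneMap (asOrderHom α.1)).op σK
        = L.app (op ⦋m.unop.len + 1⦌) ⟨coneMap (asOrderHom α.1)⟩ := (app_eq L _ _).symm
      _ = K.map (SimplexCategory.mkHom (theta (asOrderHom (⟨coneMap (asOrderHom α.1)⟩ : Δ[N + 1].obj (op ⦋m.unop.len + 1⦌))))).op
            (lifted x f (nh (asOrderHom (⟨coneMap (asOrderHom α.1)⟩ : Δ[N + 1].obj (op ⦋m.unop.len + 1⦌)))) (psi (asOrderHom (⟨coneMap (asOrderHom α.1)⟩ : Δ[N + 1].obj (op ⦋m.unop.len + 1⦌)))) (psi_not_surj _ hmem)) := h2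
      _ = K.map (SimplexCategory.mkHom (theta (asOrderHom (⟨coneMap (asOrderHom α.1)⟩ : Δ[N + 1].obj (op ⦋m.unop.len + 1⦌))))).op
            (K.map (coneMap β).op (lifted x f (m.unop.len + 1) (asOrderHom α.1) α.2)) := by
          rw [lifted_natural x f (psi (asOrderHom (⟨coneMap (asOrderHom α.1)⟩ : Δ[N + 1].obj (op ⦋m.unop.len + 1⦌)))) (asOrderHom α.1) (psi_not_surj _ hmem) α.2 β hβ]
      _ = K.map ((SimplexCategory.mkHom (theta (asOrderHom (⟨coneMap (asOrderHom α.1)⟩ : Δ[N + 1].obj (op ⦋m.unop.len + 1⦌)))) ≫ coneMap β).op)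
            (lifted x f (m.unop.len + 1) (asOrderHom α.1) α.2) := by
          rw [op_comp, FunctorToTypes.map_comp_apply]
      _ = (show K.obj (op ⦋m.unop.len + 1⦌) from (f.app m α).1) := by
          rw [hid]
          exact FunctorToTypes.map_id_apply K
            (lifted x f (m.unop.len + 1) (asOrderHom α.1) α.2)
  have hfacr : ℓ ≫ sliceMap p x = g := by
    have hτ1 : p.app (op ⦋N + 1⦌) σK = τ.1 := by
      have h3 := ConcreteCategory.congr_hom (NatTrans.congr_app sq2.fac_right (op ⦋N + 1⦌))
        (⟨𝟙 (⦋N + 1⦌ : SimplexCategory)⟩ : Δ[N + 1].obj (op ⦋N + 1⦌))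
      simp only [NatTrans.comp_app, types_comp_apply] at h3
      calc p.app (op ⦋N + 1⦌) σK
          = G.app (op ⦋N + 1⦌) ⟨𝟙 (⦋N + 1⦌ : SimplexCategory)⟩ := h3
        _ = K'.map (𝟙 (⦋N + 1⦌ : SimplexCategory)).op τ.1 := rfl
        _ = (show K'.obj (op ⦋N + 1⦌) from τ.1) := FunctorToTypes.map_id_apply K' τ.1
    apply hom_ext
    intro m
    ext α
    apply Subtype.ext
    show p.app _ (K.map (coneMap (asOrderHom α)).op σK) = (g.app m α).1
    rw [NatTrans.naturality_apply p, hτ1, app_eq g]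
    rfl
  exact ⟨⟨⟨ℓ, hfacl, hfacr⟩⟩⟩
end SSet
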